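/- arXiv:2211.15347 — 2 statements merged into one kernel-verified Lean document; each statement's English description precedes it below -/
import Mathlib

section
/- Recursive least-squares update equation: Let φ(0), …, φ(k−1) be column vectors in ℝⁿ and y(1), …, y(k) real numbers with k ≥ 2. Suppose both M(k−1) = Σ_{j=1}^{k−1} φ(j−1) φ(j−1)ᵀ and M(k) = Σ_{j=1}^{k} φ(j−1) φ(j−1)ᵀ are invertible, and set F(k) = M(k)⁻¹, θ̂(k−1) = M(k−1)⁻¹ Σ_{j=1}^{k−1} φ(j−1) y(j), and θ̂(k) = M(k)⁻¹ Σ_{j=1}^{k} φ(j−1) y(j). Then θ̂(k) = θ̂(k−1) + F(k) φ(k−1) (y(k) − φ(k−1)ᵀ θ̂(k−1)). -/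
open Matrix

lemma vecMulVec_mulVec' {n : ℕ} (u v w : Fin n → ℝ) :
    Matrix.vecMulVec u v *ᵥ w = (v ⬝ᵥ w) • u := by
  ext i
  simp [Matrix.mulVec, Matrix.vecMulVec_apply, dotProduct, Finset.mul_sum, mul_assoc,
    mul_comm, mul_left_comm]

/-- **Recursive least-squares update.** With `M(k−1) = Σ_{j=1}^{k−1} φ(j−1)φ(j−1)ᵀ` and
`M(k) = Σ_{j=1}^{k} φ(j−1)φ(j−1)ᵀ` both invertible, `F(k) = M(k)⁻¹`,
`θ̂(k−1) = M(k−1)⁻¹ Σ_{j=1}^{k−1} φ(j−1)y(j)` and `θ̂(k) = M(k)⁻¹ Σ_{j=1}^{k} φ(j−1)y(j)`,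
one has `θ̂(k) = θ̂(k−1) + F(k) φ(k−1) (y(k) − φ(k−1)ᵀ θ̂(k−1))`. -/
theorem recursive_least_squares_update {n k : ℕ} (hk : 2 ≤ k)
    (φ : ℕ → Fin n → ℝ) (y : ℕ → ℝ)
    (Mprev M F : Matrix (Fin n) (Fin n) ℝ)
    (hMprev : Mprev = ∑ j ∈ Finset.range (k-1), Matrix.vecMulVec (φ j) (φ j))
    (hM : M = ∑ j ∈ Finset.range k, Matrix.vecMulVec (φ j) (φ j))
    (hMprevU : IsUnit Mprev) (hMU : IsUnit M)
    (hF : F = M⁻¹)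
    (θprev θcur : Fin n → ℝ)
    (hθprev : θprev = Mprev⁻¹ *ᵥ ∑ j ∈ Finset.range (k-1), y (j+1) • φ j)
    (hθcur : θcur = M⁻¹ *ᵥ ∑ j ∈ Finset.range k, y (j+1) • φ j) :
    θcur = θprev + (y k - φ (k-1) ⬝ᵥ θprev) • (F *ᵥ φ (k-1)) := by
  have hMdet : IsUnit M.det := (Matrix.isUnit_iff_isUnit_det M).mp hMU
  have hMprevdet : IsUnit Mprev.det := (Matrix.isUnit_iff_isUnit_det Mprev).mp hMprevU
  have hk1 : k - 1 + 1 = k := by omega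
  have hrange : Finset.range k = Finset.range (k-1+1) := by rw [hk1]
  have hMsplit : M = Mprev + Matrix.vecMulVec (φ (k-1)) (φ (k-1)) := by
    rw [hM, hrange, Finset.sum_range_succ, ← hMprev]
  have hMinv : M * M⁻¹ = 1 := Matrix.mul_nonsing_inv M hMdet
  have hMprevθ : Mprev *ᵥ θprev = ∑ j ∈ Finset.range (k-1), y (j+1) • φ j := by
    rw [hθprev, Matrix.mulVec_mulVec, Matrix.mul_nonsing_inv Mprev hMprevdet, Matrix.one_mulVec]
  have hMθ : M *ᵥ θcur = ∑ j ∈ Finset.range k, y (j+1) • φ j := by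
    rw [hθcur, Matrix.mulVec_mulVec, hMinv, Matrix.one_mulVec]
  have key : M *ᵥ θcur = M *ᵥ (θprev + (y k - φ (k-1) ⬝ᵥ θprev) • (F *ᵥ φ (k-1))) := by
    rw [hMθ, Matrix.mulVec_add, Matrix.mulVec_smul, hF, Matrix.mulVec_mulVec, hMinv,
      Matrix.one_mulVec]
    rw [hMsplit, Matrix.add_mulVec, vecMulVec_mulVec', hMprevθ, hrange, Finset.sum_range_succ, hk1]
    module
  have := congrArg (fun v => M⁻¹ *ᵥ v) key
  simpa [Matrix.mulVec_mulVec, Matrix.nonsing_inv_mul M hMdet, Matrix.one_mulVec] using this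
end

section
/- Strict decrease of the gain-matrix trace in recursive least squares: Let F be a symmetric positive definite n×n real matrix and φ a nonzero column vector in ℝⁿ. Then 1 + φᵀ F φ > 0 and tr[(F⁻¹ + φ φᵀ)⁻¹] < tr[F]. -/
open Matrix

private lemma mul_vecMulVec {n : ℕ} (A : Matrix (Fin n) (Fin n) ℝ) (w v : Fin n → ℝ) :
    A * vecMulVec w v = vecMulVec (A *ᵥ w) v := by
  ext i j
  simp [Matrix.mul_apply, vecMulVec_apply, Matrix.mulVec, dotProduct, Finset.sum_mul,
    mul_assoc]

private lemma vecMulVec_mul {n : ℕ} (A : Matrix (Fin n) (Fin n) ℝ) (w v : Fin n → ℝ) :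
    vecMulVec w v * A = vecMulVec w (v ᵥ* A) := by
  ext i j
  simp [Matrix.mul_apply, vecMulVec_apply, Matrix.vecMul, dotProduct, Finset.mul_sum,
    mul_assoc, mul_comm, mul_left_comm]

private lemma vecMulVec_mul_vecMulVec {n : ℕ} (w v w' v' : Fin n → ℝ) :
    vecMulVec w v * vecMulVec w' v' = (v ⬝ᵥ w') • vecMulVec w v' := by
  ext i j
  simp [Matrix.mul_apply, vecMulVec_apply, dotProduct, Finset.mul_sum, Finset.sum_mul]
  ring_nf
  congr 1
  ext k
  ring

private lemma trace_vecMulVec {n : ℕ} (w v : Fin n → ℝ) :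
    (vecMulVec w v).trace = w ⬝ᵥ v := by
  simp [Matrix.trace, Matrix.diag, vecMulVec_apply, dotProduct]

/-- **Strict decrease of the RLS gain-matrix trace.** If `F` is a symmetric positive definite
n×n real matrix and `φ ∈ ℝⁿ` is nonzero, then `1 + φᵀ F φ > 0` and
`tr[(F⁻¹ + φφᵀ)⁻¹] < tr[F]`. -/
theorem rls_gain_trace_strict_decrease {n : ℕ}
    (F : Matrix (Fin n) (Fin n) ℝ) (hF : F.PosDef)
    (φ : Fin n → ℝ) (hφ : φ ≠ 0) :
    0 < 1 + φ ⬝ᵥ (F *ᵥ φ) ∧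
      ((F⁻¹ + Matrix.vecMulVec φ φ)⁻¹).trace < F.trace := by
  have hs : 0 < φ ⬝ᵥ (F *ᵥ φ) := by
    have := hF.dotProduct_mulVec_pos hφ
    simpa using this
  set s : ℝ := φ ⬝ᵥ (F *ᵥ φ) with hsdef
  have h1s : 0 < 1 + s := by linarith
  refine ⟨h1s, ?_⟩
  have hdet : IsUnit F.det := hF.det_pos.ne'.isUnit
  set u : Fin n → ℝ := F *ᵥ φ with hudef
  set c : ℝ := (1 + s)⁻¹ with hcdef
  have hc : 0 < c := inv_pos.mpr h1s
  -- symmetry: φ ᵥ* F = u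
  have hFt : Fᵀ = F := by
    ext i j
    rw [Matrix.transpose_apply]
    conv_lhs => rw [← hF.1]
    simp [Matrix.conjTranspose_apply]
  have hsym : φ ᵥ* F = u := by
    show φ ᵥ* F = F *ᵥ φ
    nth_rewrite 1 [← hFt]
    exact Matrix.vecMul_transpose F φ
  have hFiu : F⁻¹ *ᵥ u = φ := by
    rw [hudef, Matrix.mulVec_mulVec, Matrix.nonsing_inv_mul F hdet]
    simp
  have hkey : (F⁻¹ + vecMulVec φ φ) * (F - c • vecMulVec u u) = 1 := by
    rw [Matrix.add_mul, Matrix.mul_sub, Matrix.mul_sub, Matrix.nonsing_inv_mul F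
      hdet, Matrix.mul_smul, Matrix.mul_smul, _root_.mul_vecMulVec, hFiu,
      _root_.vecMulVec_mul, hsym, vecMulVec_mul_vecMulVec, ← hsdef, smul_smul]
    have : (1 : Matrix (Fin n) (Fin n) ℝ) - c • vecMulVec φ u +
        (vecMulVec φ u - (c * s) • vecMulVec φ u) =
        1 + (1 - c - c * s) • vecMulVec φ u := by
      rw [sub_smul, sub_smul, one_smul]
      abel
    rw [this]
    have hz : 1 - c - c * s = 0 := by
      have : c * (1 + s) = 1 := inv_mul_cancel₀ (ne_of_gt h1s)
      nlinarith
    rw [hz, zero_smul, add_zero]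
  have hinv : (F⁻¹ + vecMulVec φ φ)⁻¹ = F - c • vecMulVec u u :=
    Matrix.inv_eq_right_inv hkey
  rw [hinv, Matrix.trace_sub, Matrix.trace_smul, _root_.trace_vecMulVec]
  have hu : u ≠ 0 := by
    intro h
    apply hφ
    have := congrArg (F⁻¹ *ᵥ ·) h
    simpa [hFiu] using this
  have huu : 0 < u ⬝ᵥ u := by
    have : u ⬝ᵥ u = ∑ i, u i ^ 2 := by simp [dotProduct, sq]
    rw [this]
    apply Finset.sum_pos'
    · intro i _; positivity
    · obtain ⟨i, hi⟩ := Function.ne_iff.mp hu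
      exact ⟨i, Finset.mem_univ i, by rw [sq]; exact mul_self_pos.mpr hi⟩
  have : 0 < c * (u ⬝ᵥ u) := mul_pos hc huu
  simp only [smul_eq_mul]
  linarith
end
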